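/- Let x : [0,∞) → ℝ be càdlàg of bounded variation with jumps summable on compacts, and for ε > 0 define x^{(ε)}_t = x_t − Σ_{s∈(0,t]} (x_s − x_{s−})·1_{{x_s − x_{s−} ∈ (0,ε)}}. Then each x^{(ε)} has only finitely many positive jumps on each compact interval, x^{(ε)}_t ≤ x_t for all t, the map ε ↦ x^{(ε)}_t is non-increasing, and x^{(ε)} → x uniformly on compact intervals as ε ↓ 0. -/

import Mathlib

open MeasureTheory Filter Topology Set

/-- A function `f : ℝ → ℝ` viewed on `[0,∞)` is càdlàg. -/
def Cadlag (f : ℝ → ℝ) : Prop :=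
  (∀ t : ℝ, 0 ≤ t → ContinuousWithinAt f (Set.Ici t) t) ∧
  (∀ t : ℝ, 0 < t → ∃ l : ℝ, Filter.Tendsto f (nhdsWithin t (Set.Iio t)) (nhds l))

/-- removing from a càdlàg bounded-variation `x` (with jumps summable
on compacts) all positive jumps of size `< ε` yields `x^(ε)` with only finitely many
positive jumps on compacts, `x^(ε) ≤ x`, `ε ↦ x^(ε) t` non-increasing, and
`x^(ε) → x` uniformly on compacts as `ε ↓ 0`. -/
theorem stmt18 (x : ℝ → ℝ) (hx : Cadlag x)
    (hbv : ∀ t : ℝ, 0 ≤ t → BoundedVariationOn x (Set.Icc 0 t))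
    (hsum : ∀ T : ℝ, 0 < T →
      Summable (fun s : Set.Ioc (0:ℝ) T => |x s - Function.leftLim x s|))
    (xe : ℝ → ℝ → ℝ)
    (hxe : ∀ ε t : ℝ, xe ε t = x t - ∑' s : Set.Ioc (0:ℝ) t,
      (if x s - Function.leftLim x s ∈ Set.Ioo 0 ε
        then x s - Function.leftLim x s else 0)) :
    (∀ ε : ℝ, 0 < ε → ∀ T : ℝ, 0 < T →
      {s : ℝ | 0 < s ∧ s ≤ T ∧ Function.leftLim (xe ε) s < xe ε s}.Finite) ∧
    (∀ ε : ℝ, 0 < ε → ∀ t : ℝ, xe ε t ≤ x t) ∧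
    (∀ t : ℝ, AntitoneOn (fun ε => xe ε t) (Set.Ioi 0)) ∧
    (∀ T : ℝ, 0 < T →
      TendstoUniformlyOn (fun ε => xe ε) x (nhdsWithin 0 (Set.Ioi 0)) (Set.Icc 0 T)) := by
  classical
  set jmp : ℝ → ℝ := fun s => x s - Function.leftLim x s with hjmp
  set g : ℝ → ℝ → ℝ := fun ε s => if jmp s ∈ Set.Ioo 0 ε then jmp s else 0 with hgdef
  have hg0 : ∀ ε s, 0 ≤ g ε s := by
    intro ε s
    simp only [hgdef]
    split
    · exact le_of_lt (by assumption : jmp s ∈ Set.Ioo 0 ε).1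
    · exact le_rfl
  have hgle : ∀ ε s, g ε s ≤ |jmp s| := by
    intro ε s
    simp only [hgdef]
    split
    · exact le_abs_self _
    · exact abs_nonneg _
  have hgmono : ∀ ε₁ ε₂ : ℝ, ε₁ ≤ ε₂ → ∀ s, g ε₁ s ≤ g ε₂ s := by
    intro ε₁ ε₂ h s
    simp only [hgdef]
    by_cases h1 : jmp s ∈ Set.Ioo 0 ε₁
    · have h2 : jmp s ∈ Set.Ioo 0 ε₂ := ⟨h1.1, lt_of_lt_of_le h1.2 h⟩
      rw [if_pos h1, if_pos h2]
    · rw [if_neg h1]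
      split
      · exact le_of_lt (by assumption : jmp s ∈ Set.Ioo 0 ε₂).1
      · exact le_rfl
  -- rewrite xe in terms of g and indicators
  have hxe' : ∀ ε t : ℝ, xe ε t = x t - ∑' u, (Set.Ioc (0:ℝ) t).indicator (g ε) u := by
    intro ε t
    rw [hxe ε t, ← tsum_subtype (Set.Ioc (0:ℝ) t) (g ε)]
  -- summability of big jumps
  have hsumA : ∀ T : ℝ, 0 < T → Summable ((Set.Ioc (0:ℝ) T).indicator (fun s => |jmp s|)) := by
    intro T hT
    exact summable_subtype_iff_indicator.1 (hsum T hT)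
  have hindle : ∀ ε T u, (Set.Ioc (0:ℝ) T).indicator (g ε) u
      ≤ (Set.Ioc (0:ℝ) T).indicator (fun s => |jmp s|) u := by
    intro ε T u
    by_cases hu : u ∈ Set.Ioc (0:ℝ) T
    · rw [Set.indicator_of_mem hu, Set.indicator_of_mem hu]; exact hgle ε u
    · rw [Set.indicator_of_notMem hu, Set.indicator_of_notMem hu]
  have hind0 : ∀ ε (S : Set ℝ) u, 0 ≤ S.indicator (g ε) u := by
    intro ε S u
    exact Set.indicator_nonneg (fun s _ => hg0 ε s) u
  have hsumg : ∀ ε (T : ℝ), 0 < T → Summable ((Set.Ioc (0:ℝ) T).indicator (g ε)) := by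
    intro ε T hT
    exact Summable.of_nonneg_of_le (hind0 ε _) (hindle ε T) (hsumA T hT)
  have hsumgIoo : ∀ ε (s : ℝ), 0 < s → Summable ((Set.Ioo (0:ℝ) s).indicator (g ε)) := by
    intro ε s hs
    refine Summable.of_nonneg_of_le (hind0 ε _) (fun u => ?_) (hsumg ε s hs)
    by_cases hu : u ∈ Set.Ioo (0:ℝ) s
    · rw [Set.indicator_of_mem hu, Set.indicator_of_mem (Set.Ioo_subset_Ioc_self hu)]
    · rw [Set.indicator_of_notMem hu]; exact hind0 ε _ u
  -- key: left limit of the jump sum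
  have key : ∀ ε (s : ℝ), 0 < s →
      Tendsto (fun t => ∑' u, (Set.Ioc (0:ℝ) t).indicator (g ε) u) (𝓝[<] s)
        (𝓝 (∑' u, (Set.Ioo (0:ℝ) s).indicator (g ε) u)) := by
    intro ε s hs
    set M := ∑' u, (Set.Ioo (0:ℝ) s).indicator (g ε) u with hM
    rw [Metric.tendsto_nhdsWithin_nhds]
    intro δ hδ
    -- pick a finset capturing all but δ of M
    have hev : ∀ᶠ F in (atTop : Filter (Finset ℝ)),
        ∑ u ∈ F, (Set.Ioo (0:ℝ) s).indicator (g ε) u ∈ Set.Ioi (M - δ) := by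
      refine (hsumgIoo ε s hs).hasSum.eventually (Ioi_mem_nhds ?_)
      linarith
    obtain ⟨F, hF⟩ := hev.exists
    set F' : Finset ℝ := F.filter (fun u => u ∈ Set.Ioo (0:ℝ) s) with hF'
    set t₀ : ℝ := (insert (0:ℝ) F').max' (by simp) with ht₀
    have ht₀0 : 0 ≤ t₀ := Finset.le_max' _ _ (Finset.mem_insert_self _ _)
    have ht₀s : t₀ < s := by
      rw [ht₀, Finset.max'_lt_iff]
      intro y hy
      rcases Finset.mem_insert.1 hy with h | h
      · rw [h]; exact hs
      · exact ((Finset.mem_filter.1 h).2).2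
    refine ⟨s - t₀, by linarith, fun t ht hdist => ?_⟩
    have hts : t < s := ht
    have htt₀ : t₀ < t := by
      rw [Real.dist_eq, abs_of_neg (by linarith : t - s < 0)] at hdist
      linarith
    have ht0 : 0 < t := lt_of_le_of_lt ht₀0 htt₀
    -- lower bound for the sum at t
    have hsub : ∀ u ∈ F', u ∈ Set.Ioc (0:ℝ) t := by
      intro u hu
      have h1 := (Finset.mem_filter.1 hu).2
      have h2 : u ≤ t₀ := Finset.le_max' _ _ (Finset.mem_insert_of_mem hu)
      exact ⟨h1.1, le_of_lt (lt_of_le_of_lt h2 htt₀)⟩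
    have hFF' : ∑ u ∈ F, (Set.Ioo (0:ℝ) s).indicator (g ε) u = ∑ u ∈ F', g ε u := by
      rw [hF']
      exact Finset.sum_indicator_eq_sum_filter F (fun _ => g ε) (fun _ => Set.Ioo (0:ℝ) s) id
    have hlow : ∑ u ∈ F', g ε u ≤ ∑' u, (Set.Ioc (0:ℝ) t).indicator (g ε) u := by
      have : ∑ u ∈ F', g ε u = ∑ u ∈ F', (Set.Ioc (0:ℝ) t).indicator (g ε) u := by
        refine Finset.sum_congr rfl (fun u hu => ?_)
        rw [Set.indicator_of_mem (hsub u hu)]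
      rw [this]
      exact Summable.sum_le_tsum F' (fun u _ => hind0 ε _ u) (hsumg ε t ht0)
    have hup : ∑' u, (Set.Ioc (0:ℝ) t).indicator (g ε) u ≤ M := by
      refine Summable.tsum_le_tsum (fun u => ?_) (hsumg ε t ht0) (hsumgIoo ε s hs)
      by_cases hu : u ∈ Set.Ioc (0:ℝ) t
      · rw [Set.indicator_of_mem hu,
          Set.indicator_of_mem (show u ∈ Set.Ioo (0:ℝ) s from ⟨hu.1, lt_of_le_of_lt hu.2 hts⟩)]
      · rw [Set.indicator_of_notMem hu]; exact hind0 ε _ u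
    have hlow' : M - δ < ∑' u, (Set.Ioc (0:ℝ) t).indicator (g ε) u := by
      calc M - δ < ∑ u ∈ F, (Set.Ioo (0:ℝ) s).indicator (g ε) u := hF
      _ = ∑ u ∈ F', g ε u := hFF'
      _ ≤ _ := hlow
    rw [Real.dist_eq, abs_of_nonpos (by linarith)]
    linarith
  -- left limit of xe
  have hxlim : ∀ s : ℝ, 0 < s → Tendsto x (𝓝[<] s) (𝓝 (Function.leftLim x s)) := by
    intro s hs
    obtain ⟨l, hl⟩ := hx.2 s hs
    have : Function.leftLim x s = l :=
      leftLim_eq_of_tendsto hl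
    rwa [this]
  have hleft : ∀ ε (s : ℝ), 0 < s → Function.leftLim (xe ε) s
      = Function.leftLim x s - ∑' u, (Set.Ioo (0:ℝ) s).indicator (g ε) u := by
    intro ε s hs
    refine leftLim_eq_of_tendsto ?_
    have h1 : Tendsto (fun t => x t - ∑' u, (Set.Ioc (0:ℝ) t).indicator (g ε) u) (𝓝[<] s)
        (𝓝 (Function.leftLim x s - ∑' u, (Set.Ioo (0:ℝ) s).indicator (g ε) u)) :=
      (hxlim s hs).sub (key ε s hs)
    refine h1.congr (fun t => (hxe' ε t).symm)
  -- split off the point s from the sum over Ioc 0 s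
  have hsplit : ∀ ε (s : ℝ), 0 < s →
      ∑' u, (Set.Ioc (0:ℝ) s).indicator (g ε) u
        = (∑' u, (Set.Ioo (0:ℝ) s).indicator (g ε) u) + g ε s := by
    intro ε s hs
    have heq : (Set.Ioc (0:ℝ) s).indicator (g ε)
        = fun u => (Set.Ioo (0:ℝ) s).indicator (g ε) u + (if u = s then g ε s else 0) := by
      funext u
      by_cases hu : u = s
      · subst hu
        rw [Set.indicator_of_mem (by exact ⟨hs, le_rfl⟩ : u ∈ Set.Ioc (0:ℝ) u),
          Set.indicator_of_notMem (by simp : u ∉ Set.Ioo (0:ℝ) u), if_pos rfl]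
        ring
      · rw [if_neg hu]
        by_cases hu2 : u ∈ Set.Ioc (0:ℝ) s
        · have : u ∈ Set.Ioo (0:ℝ) s := ⟨hu2.1, lt_of_le_of_ne hu2.2 hu⟩
          rw [Set.indicator_of_mem hu2, Set.indicator_of_mem this]; ring
        · have : u ∉ Set.Ioo (0:ℝ) s := fun h => hu2 (Set.Ioo_subset_Ioc_self h)
          rw [Set.indicator_of_notMem hu2, Set.indicator_of_notMem this]; ring
    rw [heq, Summable.tsum_add (hsumgIoo ε s hs) ⟨_, hasSum_ite_eq s (g ε s)⟩, tsum_ite_eq]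
  -- finiteness of big jumps
  have hfin : ∀ ε : ℝ, 0 < ε → ∀ T : ℝ, 0 < T →
      {s : ℝ | s ∈ Set.Ioc (0:ℝ) T ∧ ε ≤ |jmp s|}.Finite := by
    intro ε hε T hT
    have h1 : Tendsto (fun s : Set.Ioc (0:ℝ) T => |jmp s|) cofinite (𝓝 0) :=
      (hsum T hT).tendsto_cofinite_zero
    have h2 : {u : Set.Ioc (0:ℝ) T | ¬ |jmp (u:ℝ)| ∈ Metric.ball (0:ℝ) ε}.Finite := by
      have := h1.eventually (eventually_mem_set.2 (Metric.ball_mem_nhds (0:ℝ) hε))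
      exact eventually_cofinite.1 this
    have h3 : ((fun u : Set.Ioc (0:ℝ) T => (u : ℝ)) '' {u | ¬ |jmp (u:ℝ)| ∈ Metric.ball (0:ℝ) ε}).Finite :=
      h2.image _
    refine h3.subset ?_
    rintro s ⟨hs1, hs2⟩
    refine ⟨⟨s, hs1⟩, ?_, rfl⟩
    simp only [Set.mem_setOf_eq, Metric.mem_ball, Real.dist_eq, sub_zero, abs_abs, not_lt]
    exact hs2
  refine ⟨?_, ?_, ?_, ?_⟩
  · -- finitely many positive jumps of xe ε
    intro ε hε T hT
    refine (hfin ε hε T hT).subset ?_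
    rintro s ⟨hs0, hsT, hjump⟩
    have h1 := hleft ε s hs0
    have h2 : xe ε s = x s - ((∑' u, (Set.Ioo (0:ℝ) s).indicator (g ε) u) + g ε s) := by
      rw [hxe' ε s, hsplit ε s hs0]
    rw [h1, h2] at hjump
    have h3 : g ε s < jmp s := by
      simp only [hjmp]
      linarith
    refine ⟨⟨hs0, hsT⟩, ?_⟩
    by_cases hc : jmp s ∈ Set.Ioo 0 ε
    · exfalso
      have : g ε s = jmp s := if_pos hc
      rw [this] at h3
      exact lt_irrefl _ h3
    · have hg : g ε s = 0 := if_neg hc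
      rw [hg] at h3
      have : ¬ jmp s < ε := fun h => hc ⟨h3, h⟩
      rw [abs_of_pos h3]
      exact not_lt.1 this
  · -- xe ε ≤ x
    intro ε hε t
    rw [hxe ε t]
    have : 0 ≤ ∑' s : Set.Ioc (0:ℝ) t,
        (if x s - Function.leftLim x s ∈ Set.Ioo 0 ε
          then x s - Function.leftLim x s else 0) := by
      refine tsum_nonneg (fun s => ?_)
      exact hg0 ε s
    linarith
  · -- antitone in ε
    intro t ε₁ hε₁ ε₂ hε₂ h12
    simp only
    rw [hxe' ε₁ t, hxe' ε₂ t]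
    by_cases ht : 0 < t
    · have hle : ∑' u, (Set.Ioc (0:ℝ) t).indicator (g ε₁) u
          ≤ ∑' u, (Set.Ioc (0:ℝ) t).indicator (g ε₂) u := by
        refine Summable.tsum_le_tsum (fun u => ?_) (hsumg ε₁ t ht) (hsumg ε₂ t ht)
        by_cases hu : u ∈ Set.Ioc (0:ℝ) t
        · rw [Set.indicator_of_mem hu, Set.indicator_of_mem hu]
          exact hgmono ε₁ ε₂ h12 u
        · rw [Set.indicator_of_notMem hu, Set.indicator_of_notMem hu]
      linarith
    · have hempty : Set.Ioc (0:ℝ) t = ∅ := Set.Ioc_eq_empty ht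
      rw [hempty]
      simp
  · -- uniform convergence
    intro T hT
    rw [Metric.tendstoUniformlyOn_iff]
    intro δ hδ
    -- choose a finset with small tail
    have htail : Tendsto (fun F : Finset ℝ =>
        ∑' u : {v : ℝ // v ∉ F}, (Set.Ioc (0:ℝ) T).indicator (fun s => |jmp s|) u) atTop (𝓝 0) :=
      tendsto_tsum_compl_atTop_zero _
    have hev : ∀ᶠ F : Finset ℝ in atTop,
        ∑' u : {v : ℝ // v ∉ F}, (Set.Ioc (0:ℝ) T).indicator (fun s => |jmp s|) u
          ∈ Set.Iio δ := htail.eventually (eventually_mem_set.2 (Iio_mem_nhds hδ))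
    obtain ⟨F, hF⟩ := hev.exists
    set A : ℝ → ℝ := (Set.Ioc (0:ℝ) T).indicator (fun s => |jmp s|) with hA
    set F' : Finset ℝ := F.filter (fun u => 0 < A u) with hF'defn
    set ε₀ : ℝ := if h : F'.Nonempty then (F'.image A).min' (h.image A) else 1 with hε₀
    have hε₀key : ∀ u ∈ F, 0 < A u → ε₀ ≤ A u := by
      intro u hu hAu
      have huF' : u ∈ F' := Finset.mem_filter.2 ⟨hu, hAu⟩
      have hne : F'.Nonempty := ⟨u, huF'⟩
      rw [hε₀, dif_pos hne]
      exact Finset.min'_le _ _ (Finset.mem_image_of_mem A huF')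
    have hε₀pos : 0 < ε₀ := by
      rw [hε₀]
      split
      · rename_i h
        obtain ⟨u, hu, hAu⟩ := Finset.mem_image.1 ((F'.image A).min'_mem (h.image A))
        rw [← hAu]
        exact (Finset.mem_filter.1 hu).2
      · exact one_pos
    have hmem : Set.Ioc (0:ℝ) ε₀ ∈ 𝓝[>] (0:ℝ) :=
      Ioc_mem_nhdsGT_of_mem ⟨le_rfl, hε₀pos⟩
    filter_upwards [hmem] with ε hε
    intro t ht
    -- the removed mass at level ε over (0, t]
    have hsum_t : Summable ((Set.Ioc (0:ℝ) t).indicator (g ε)) := by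
      refine Summable.of_nonneg_of_le (hind0 ε _) (fun u => ?_) (hsumg ε T hT)
      by_cases hu : u ∈ Set.Ioc (0:ℝ) t
      · rw [Set.indicator_of_mem hu,
          Set.indicator_of_mem (show u ∈ Set.Ioc (0:ℝ) T from ⟨hu.1, le_trans hu.2 ht.2⟩)]
      · rw [Set.indicator_of_notMem hu]; exact hind0 ε _ u
    have hST : ∑' u, (Set.Ioc (0:ℝ) t).indicator (g ε) u
        ≤ ∑' u, (Set.Ioc (0:ℝ) T).indicator (g ε) u := by
      refine Summable.tsum_le_tsum (fun u => ?_) hsum_t (hsumg ε T hT)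
      by_cases hu : u ∈ Set.Ioc (0:ℝ) t
      · rw [Set.indicator_of_mem hu,
          Set.indicator_of_mem (show u ∈ Set.Ioc (0:ℝ) T from ⟨hu.1, le_trans hu.2 ht.2⟩)]
      · rw [Set.indicator_of_notMem hu]; exact hind0 ε _ u
    -- the removed mass over (0, T] is supported outside F
    have hsupp : Function.support ((Set.Ioc (0:ℝ) T).indicator (g ε)) ⊆ {v : ℝ | v ∉ F} := by
      intro u hu
      simp only [Function.mem_support] at hu
      have huT : u ∈ Set.Ioc (0:ℝ) T := by
        by_contra h
        exact hu (Set.indicator_of_notMem h _)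
      rw [Set.indicator_of_mem huT] at hu
      have hjm : jmp u ∈ Set.Ioo 0 ε := by
        by_contra h
        exact hu (if_neg h)
      have hAu : A u = |jmp u| := Set.indicator_of_mem huT _
      have hApos : 0 < A u := by
        rw [hAu]
        exact lt_of_lt_of_le hjm.1 (le_abs_self _)
      intro huF
      have h1 : ε₀ ≤ A u := hε₀key u huF hApos
      have h2 : A u < ε := by
        rw [hAu, abs_of_pos hjm.1]
        exact hjm.2
      have := lt_of_le_of_lt h1 h2
      exact absurd hε.2 (not_le.2 this)
    have hRtail : ∑' u, (Set.Ioc (0:ℝ) T).indicator (g ε) u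
        ≤ ∑' u : {v : ℝ // v ∉ F}, A u := by
      have heq : ∑' u : {v : ℝ | v ∉ F}, (Set.Ioc (0:ℝ) T).indicator (g ε) u
          = ∑' u, (Set.Ioc (0:ℝ) T).indicator (g ε) u :=
        tsum_subtype_eq_of_support_subset hsupp
      rw [← heq]
      refine Summable.tsum_le_tsum (fun u => hindle ε T u) ?_ ?_
      · exact (hsumg ε T hT).subtype _
      · exact (hsumA T hT).subtype _
    -- conclude
    have hdist : dist (x t) (xe ε t) = ∑' u, (Set.Ioc (0:ℝ) t).indicator (g ε) u := by
      rw [hxe' ε t, Real.dist_eq]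
      have : x t - (x t - ∑' u, (Set.Ioc (0:ℝ) t).indicator (g ε) u)
          = ∑' u, (Set.Ioc (0:ℝ) t).indicator (g ε) u := by ring
      rw [this, abs_of_nonneg (tsum_nonneg (fun u => hind0 ε _ u))]
    rw [hdist]
    calc ∑' u, (Set.Ioc (0:ℝ) t).indicator (g ε) u
        ≤ ∑' u, (Set.Ioc (0:ℝ) T).indicator (g ε) u := hST
      _ ≤ ∑' u : {v : ℝ // v ∉ F}, A u := hRtail
      _ < δ := hF
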